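/- Row-stochastic-like contraction: for the matrix P = D̃^{-1/2} Ã D̃^{-1/2} of a connected graph with self-loops, and any H^{(0)} ∈ ℝ^{n×d}, the sequence H^{(t)} = P^t H^{(0)} converges: its limit is the orthogonal projection of H^{(0)} onto the span of D̃^{1/2}·1 (1 the all-ones vector), i.e., each column of H^{(t)} converges to a multiple of the vector D̃^{1/2}·1. -/

import Mathlib

open Matrix

noncomputable def Atilde {n : ℕ} (G : SimpleGraph (Fin n)) [DecidableRel G.Adj] :
    Matrix (Fin n) (Fin n) ℝ := G.adjMatrix ℝ + 1

noncomputable def degT {n : ℕ} (G : SimpleGraph (Fin n)) [DecidableRel G.Adj] (i : Fin n) : ℝ :=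
  ∑ j, Atilde G i j

noncomputable def Dtilde {n : ℕ} (G : SimpleGraph (Fin n)) [DecidableRel G.Adj] :
    Matrix (Fin n) (Fin n) ℝ := Matrix.diagonal (degT G)

noncomputable def DinvSqrt {n : ℕ} (G : SimpleGraph (Fin n)) [DecidableRel G.Adj] :
    Matrix (Fin n) (Fin n) ℝ := Matrix.diagonal (fun i => (Real.sqrt (degT G i))⁻¹)

noncomputable def Lsym {n : ℕ} (G : SimpleGraph (Fin n)) [DecidableRel G.Adj] :
    Matrix (Fin n) (Fin n) ℝ := DinvSqrt G * (Dtilde G - Atilde G) * DinvSqrt G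

/-- Euclidean (ℓ²) norm of a vector. -/
noncomputable def eucNorm {m : ℕ} (v : Fin m → ℝ) : ℝ := Real.sqrt (∑ i, (v i) ^ 2)

variable {n : ℕ} (G : SimpleGraph (Fin n)) [DecidableRel G.Adj]

lemma degT_eq (i : Fin n) : degT G i = G.degree i + 1 := by
  simp [degT, Atilde, Matrix.one_apply, Finset.sum_add_distrib,
    SimpleGraph.degree, SimpleGraph.neighborFinset_eq_filter]

lemma degT_pos (i : Fin n) : 0 < degT G i := by
  rw [degT_eq]; positivity

lemma sub_eq_lap : Dtilde G - Atilde G = G.lapMatrix ℝ := by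
  have : Dtilde G = G.degMatrix ℝ + 1 := by
    rw [Dtilde]
    ext i j
    simp [degT_eq, SimpleGraph.degMatrix, Matrix.diagonal, Matrix.one_apply]
    split <;> simp
  rw [this, SimpleGraph.lapMatrix, Atilde]
  abel

lemma sqrt_degT_pos (i : Fin n) : 0 < Real.sqrt (degT G i) :=
  Real.sqrt_pos.mpr (degT_pos G i)

lemma DinvSqrt_conjTranspose : (DinvSqrt G)ᴴ = DinvSqrt G := by
  simp [DinvSqrt, diagonal_conjTranspose]

lemma Lsym_posSemidef : (Lsym G).PosSemidef := by
  have h := SimpleGraph.posSemidef_lapMatrix ℝ G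
  have := h.mul_mul_conjTranspose_same (DinvSqrt G)
  rwa [DinvSqrt_conjTranspose, ← sub_eq_lap] at this

-- signless Laplacian is PSD
lemma signless_psd (x : Fin n → ℝ) :
    0 ≤ x ⬝ᵥ ((G.degMatrix ℝ + G.adjMatrix ℝ) *ᵥ x) := by
  have hx : x ⬝ᵥ ((G.degMatrix ℝ + G.adjMatrix ℝ) *ᵥ x) =
      (∑ i : Fin n, ∑ j : Fin n, if G.Adj i j then (x i + x j)^2 else 0) / 2 := by
    simp_rw [add_mulVec, dotProduct_add, SimpleGraph.dotProduct_mulVec_degMatrix,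
      SimpleGraph.dotProduct_mulVec_adjMatrix, ← Finset.sum_add_distrib,
      SimpleGraph.degree_eq_sum_if_adj, Finset.sum_mul, ite_mul, one_mul, zero_mul,
      ← Finset.sum_add_distrib, ite_add_ite, add_zero]
    rw [← add_self_div_two (∑ x_1 : Fin n, ∑ x_2 : Fin n, _)]
    conv_lhs => enter [1,2,2,i,2,j]; rw [if_congr (SimpleGraph.adj_comm G i j) rfl rfl]
    conv_lhs => enter [1,2]; rw [Finset.sum_comm]
    simp_rw [← Finset.sum_add_distrib, ite_add_ite]
    congr 2 with i
    congr 2 with j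
    ring_nf
  rw [hx]
  positivity

lemma DA_apply : Dtilde G + Atilde G = (G.degMatrix ℝ + G.adjMatrix ℝ) + (2 : ℤ) := by
  have h1 : Dtilde G = G.degMatrix ℝ + 1 := by
    ext i j
    simp [Dtilde, degT_eq, SimpleGraph.degMatrix, Matrix.diagonal, Matrix.one_apply]
    split <;> simp
  rw [h1, Atilde, show ((2:ℤ) : Matrix (Fin n) (Fin n) ℝ) = 1 + 1 by norm_num]
  abel

lemma signless_posSemidef : (G.degMatrix ℝ + G.adjMatrix ℝ).PosSemidef := by
  refine Matrix.PosSemidef.of_dotProduct_mulVec_nonneg ?_ ?_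
  · rw [Matrix.IsHermitian, Matrix.conjTranspose_eq_transpose_of_trivial]
    exact ((G.isSymm_degMatrix (R := ℝ)).add G.isSymm_adjMatrix)
  · intro x
    simpa using signless_psd G x

lemma DA_posDef : (Dtilde G + Atilde G).PosDef := by
  rw [DA_apply]
  exact Matrix.PosDef.posSemidef_add (signless_posSemidef G) (Matrix.PosDef.intCast 2 (by norm_num))

lemma SDS_eq_one : DinvSqrt G * Dtilde G * DinvSqrt G = 1 := by
  rw [DinvSqrt, Dtilde, diagonal_mul_diagonal, diagonal_mul_diagonal]
  have hfun : (fun i => (Real.sqrt (degT G i))⁻¹ * degT G i * (Real.sqrt (degT G i))⁻¹)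
      = fun _ : Fin n => (1:ℝ) := by
    funext i
    have h := sqrt_degT_pos G i
    have hd : Real.sqrt (degT G i) * Real.sqrt (degT G i) = degT G i :=
      Real.mul_self_sqrt (degT_pos G i).le
    rw [← hd]
    field_simp
    rw [Real.sqrt_sq h.le]
  rw [hfun, diagonal_one]

lemma two_sub_Lsym_eq :
    (2 : Matrix (Fin n) (Fin n) ℝ) - Lsym G
      = DinvSqrt G * (Dtilde G + Atilde G) * DinvSqrt G := by
  have h2 : (2 : Matrix (Fin n) (Fin n) ℝ) = 1 + 1 := by norm_num
  rw [Lsym, mul_sub, sub_mul, mul_add, add_mul, SDS_eq_one, h2]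
  abel

lemma DinvSqrt_mulVec_ne_zero {v : Fin n → ℝ} (hv : v ≠ 0) : DinvSqrt G *ᵥ v ≠ 0 := by
  intro h
  apply hv
  funext i
  have := congrFun h i
  rw [DinvSqrt, mulVec_diagonal] at this
  have hpos := sqrt_degT_pos G i
  have : ((Real.sqrt (degT G i))⁻¹) * v i = 0 := this
  rcases mul_eq_zero.mp this with h' | h'
  · exact absurd h' (by positivity)
  · exact h'

lemma two_sub_Lsym_posDef : ((2 : Matrix (Fin n) (Fin n) ℝ) - Lsym G).PosDef := by
  rw [two_sub_Lsym_eq]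
  have hDA := DA_posDef G
  refine Matrix.PosDef.of_dotProduct_mulVec_pos ?_ fun x hx => ?_
  · have h := hDA.posSemidef.mul_mul_conjTranspose_same (DinvSqrt G)
    rw [DinvSqrt_conjTranspose] at h
    exact h.1
  · nth_rewrite 1 [show DinvSqrt G * (Dtilde G + Atilde G) * DinvSqrt G
        = (DinvSqrt G)ᴴ * (Dtilde G + Atilde G) * DinvSqrt G by rw [DinvSqrt_conjTranspose]]
    simpa only [star_mulVec, dotProduct_mulVec, vecMul_vecMul] using
      hDA.dotProduct_mulVec_pos (DinvSqrt_mulVec_ne_zero G hx)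

lemma P_isHermitian : (1 - Lsym G).IsHermitian :=
  Matrix.isHermitian_one.sub (Lsym_posSemidef G).1

lemma eig_bound (k : Fin n) :
    -1 < (P_isHermitian G).eigenvalues k ∧ (P_isHermitian G).eigenvalues k ≤ 1 := by
  set μ := (P_isHermitian G).eigenvalues k with hμ
  set v : Fin n → ℝ := ⇑((P_isHermitian G).eigenvectorBasis k) with hvdef
  have hv : (1 - Lsym G) *ᵥ v = μ • v := (P_isHermitian G).mulVec_eigenvectorBasis k
  have hvne : v ≠ 0 := by
    intro h
    exact (P_isHermitian G).eigenvectorBasis.orthonormal.ne_zero k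
      (by ext i; exact congrFun h i)
  have hd : 0 < v ⬝ᵥ v := by
    simpa using (Matrix.PosDef.one (n := Fin n) (R := ℝ)).dotProduct_mulVec_pos hvne
  rw [sub_mulVec, one_mulVec] at hv
  have hL : Lsym G *ᵥ v = v - μ • v := by rw [← hv]; abel
  have h2 : 0 ≤ v ⬝ᵥ (Lsym G *ᵥ v) := by simpa using (Lsym_posSemidef G).dotProduct_mulVec_nonneg v
  rw [hL, dotProduct_sub, dotProduct_smul, smul_eq_mul] at h2
  have h3 : 0 < v ⬝ᵥ (((2 : Matrix (Fin n) (Fin n) ℝ) - Lsym G) *ᵥ v) := by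
    simpa using (two_sub_Lsym_posDef G).dotProduct_mulVec_pos hvne
  have h2v : ((2 : Matrix (Fin n) (Fin n) ℝ)) *ᵥ v = (2:ℝ) • v := by
    rw [show ((2 : Matrix (Fin n) (Fin n) ℝ)) = ((2:ℕ) : Matrix (Fin n) (Fin n) ℝ) by norm_num,
      Matrix.natCast_mulVec]
    norm_num
  rw [sub_mulVec, h2v, hL, dotProduct_sub, dotProduct_sub, dotProduct_smul, dotProduct_smul,
    smul_eq_mul, smul_eq_mul] at h3
  constructor
  · nlinarith
  · nlinarith

lemma Lsym_mulVec_eq (v : Fin n → ℝ) :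
    Lsym G *ᵥ v = DinvSqrt G *ᵥ (G.lapMatrix ℝ *ᵥ (DinvSqrt G *ᵥ v)) := by
  rw [Lsym, sub_eq_lap, mulVec_mulVec, mulVec_mulVec]

lemma S_mulVec_w : DinvSqrt G *ᵥ (fun i => Real.sqrt (degT G i)) = fun _ => 1 := by
  funext i
  rw [DinvSqrt, mulVec_diagonal]
  exact inv_mul_cancel₀ (sqrt_degT_pos G i).ne'

lemma Lsym_mulVec_w : Lsym G *ᵥ (fun i => Real.sqrt (degT G i)) = 0 := by
  rw [Lsym_mulVec_eq, S_mulVec_w]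
  have : G.lapMatrix ℝ *ᵥ (fun _ : Fin n => 1) = 0 := G.lapMatrix_mulVec_const_eq_zero
  rw [this, mulVec_zero]

lemma P_mulVec_w : (1 - Lsym G) *ᵥ (fun i => Real.sqrt (degT G i))
    = fun i => Real.sqrt (degT G i) := by
  rw [sub_mulVec, one_mulVec, Lsym_mulVec_w, sub_zero]

lemma eig_one_vec (hconn : G.Connected) {v : Fin n → ℝ} (hv : Lsym G *ᵥ v = 0) :
    ∃ c : ℝ, v = fun i => c * Real.sqrt (degT G i) := by
  rw [Lsym_mulVec_eq] at hv
  have hlap : G.lapMatrix ℝ *ᵥ (DinvSqrt G *ᵥ v) = 0 := by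
    by_contra h
    exact (DinvSqrt_mulVec_ne_zero G h) hv
  have hreach : ∀ i j : Fin n, G.Reachable i j →
      (DinvSqrt G *ᵥ v) i = (DinvSqrt G *ᵥ v) j := by
    exact (SimpleGraph.lapMatrix_mulVec_eq_zero_iff_forall_reachable G).mp hlap
  obtain ⟨j0⟩ := hconn.nonempty
  refine ⟨(DinvSqrt G *ᵥ v) j0, ?_⟩
  funext i
  have h1 := hreach i j0 (hconn.preconnected i j0)
  rw [← h1, DinvSqrt, mulVec_diagonal]
  have := sqrt_degT_pos G i
  field_simp

lemma pow_spectral (t : ℕ) :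
    (1 - Lsym G) ^ t =
      ((P_isHermitian G).eigenvectorUnitary : Matrix (Fin n) (Fin n) ℝ)
        * diagonal (fun k => (P_isHermitian G).eigenvalues k ^ t)
        * star ((P_isHermitian G).eigenvectorUnitary : Matrix (Fin n) (Fin n) ℝ) := by
  set U := ((P_isHermitian G).eigenvectorUnitary : Matrix (Fin n) (Fin n) ℝ) with hU
  have hUU : U * star U = 1 := (Matrix.mem_unitaryGroup_iff).mp (P_isHermitian G).eigenvectorUnitary.2
  have hUU' : star U * U = 1 := (Matrix.mem_unitaryGroup_iff').mp (P_isHermitian G).eigenvectorUnitary.2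
  have hspec : (1 - Lsym G) = U * diagonal (fun k => (P_isHermitian G).eigenvalues k) * star U := by
    have h := (P_isHermitian G).spectral_theorem
    rwa [RCLike.ofReal_real_eq_id, Function.id_comp] at h
  have key : ∀ a b : Fin n → ℝ,
      (U * diagonal a * star U) * (U * diagonal b * star U)
        = U * diagonal (fun k => a k * b k) * star U := by
    intro a b
    have h1 : star U * (U * (diagonal b * star U)) = diagonal b * star U := by
      rw [← Matrix.mul_assoc, hUU', one_mul]
    simp only [Matrix.mul_assoc]
    rw [h1, show diagonal a * (diagonal b * star U) = diagonal (fun k => a k * b k) * star U by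
      rw [← Matrix.mul_assoc, diagonal_mul_diagonal]]
  induction t with
  | zero =>
    simp only [pow_zero]
    rw [show (fun (_ : Fin n) => (1:ℝ)) = fun (_ : Fin n) => (1:ℝ) from rfl, diagonal_one,
      mul_one, hUU]
  | succ t ih =>
    rw [pow_succ, ih]
    refine (congrArg (fun M => (U * diagonal (fun k => (P_isHermitian G).eigenvalues k ^ t)
      * star U) * M) hspec).trans ?_
    rw [key]
    simp only [← pow_succ]

lemma inner_eq_dot (x y : EuclideanSpace ℝ (Fin n)) :
    (inner ℝ x y : ℝ) = (⇑x) ⬝ᵥ (⇑y) := by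
  rw [EuclideanSpace.inner_eq_star_dotProduct]
  rw [star_trivial, dotProduct_comm]

lemma P_transpose : (1 - Lsym G)ᵀ = 1 - Lsym G := by
  rw [← conjTranspose_eq_transpose_of_trivial]
  exact (P_isHermitian G).eq

lemma dot_eig_w (k : Fin n) :
    ((P_isHermitian G).eigenvalues k - 1) *
      ((⇑((P_isHermitian G).eigenvectorBasis k)) ⬝ᵥ (fun i => Real.sqrt (degT G i))) = 0 := by
  set v : Fin n → ℝ := ⇑((P_isHermitian G).eigenvectorBasis k) with hv
  set w : Fin n → ℝ := fun i => Real.sqrt (degT G i) with hw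
  have h1 : v ⬝ᵥ ((1 - Lsym G) *ᵥ w) = v ⬝ᵥ w := by rw [P_mulVec_w]
  have h2 : v ⬝ᵥ ((1 - Lsym G) *ᵥ w) = (P_isHermitian G).eigenvalues k * (v ⬝ᵥ w) := by
    rw [Matrix.dotProduct_mulVec, ← Matrix.mulVec_transpose, P_transpose,
      (P_isHermitian G).mulVec_eigenvectorBasis k, smul_dotProduct, smul_eq_mul]
  rw [sub_mul, h2.symm.trans h1]
  ring

lemma exists_eig_one (hconn : G.Connected) :
    ∃ k, (P_isHermitian G).eigenvalues k = 1 := by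
  by_contra h
  push_neg at h
  set b := (P_isHermitian G).eigenvectorBasis with hb
  set w : Fin n → ℝ := fun i => Real.sqrt (degT G i) with hw
  have hdot : ∀ k, (⇑(b k)) ⬝ᵥ w = 0 := by
    intro k
    have := dot_eig_w G k
    rcases mul_eq_zero.mp this with h' | h'
    · exact absurd (sub_eq_zero.mp h') (h k)
    · exact h'
  set W' : EuclideanSpace ℝ (Fin n) := (WithLp.equiv 2 (Fin n → ℝ)).symm w with hW'
  have hrep : b.repr W' = 0 := by
    ext k
    rw [b.repr_apply_apply, inner_eq_dot]
    exact hdot k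
  have : W' = 0 := by
    have := congrArg b.repr.symm hrep
    rwa [LinearIsometryEquiv.symm_apply_apply, map_zero] at this
  obtain ⟨j0⟩ := hconn.nonempty
  have : w j0 = 0 := congrFun (congrArg (WithLp.equiv 2 (Fin n → ℝ)) this) j0
  exact (sqrt_degT_pos G j0).ne' this

lemma sumW_pos (hne : Nonempty (Fin n)) :
    0 < ∑ r, Real.sqrt (degT G r) * Real.sqrt (degT G r) := by
  apply Finset.sum_pos
  · intro r _
    exact mul_pos (sqrt_degT_pos G r) (sqrt_degT_pos G r)
  · exact Finset.univ_nonempty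

lemma eig_one_form (hconn : G.Connected) {k : Fin n}
    (hk : (P_isHermitian G).eigenvalues k = 1) :
    ∃ c : ℝ, (⇑((P_isHermitian G).eigenvectorBasis k)) = (fun i => c * Real.sqrt (degT G i))
      ∧ c * c * (∑ r, Real.sqrt (degT G r) * Real.sqrt (degT G r)) = 1 := by
  have hv : (1 - Lsym G) *ᵥ ⇑((P_isHermitian G).eigenvectorBasis k)
      = ⇑((P_isHermitian G).eigenvectorBasis k) := by
    have := (P_isHermitian G).mulVec_eigenvectorBasis k
    rwa [hk, one_smul] at this
  rw [sub_mulVec, one_mulVec, sub_eq_self] at hv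
  obtain ⟨c, hc⟩ := eig_one_vec G hconn hv
  refine ⟨c, hc, ?_⟩
  have hn1 : (inner ℝ ((P_isHermitian G).eigenvectorBasis k)
      ((P_isHermitian G).eigenvectorBasis k) : ℝ) = 1 := by
    rw [real_inner_self_eq_norm_sq, (P_isHermitian G).eigenvectorBasis.orthonormal.1 k]
    norm_num
  rw [inner_eq_dot, hc] at hn1
  rw [← hn1, dotProduct]
  rw [Finset.mul_sum]
  apply Finset.sum_congr rfl
  intro r _
  ring

lemma eig_one_unique (hconn : G.Connected) {k l : Fin n}
    (hk : (P_isHermitian G).eigenvalues k = 1) (hl : (P_isHermitian G).eigenvalues l = 1) :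
    k = l := by
  by_contra hne
  obtain ⟨ck, hck, hck2⟩ := eig_one_form G hconn hk
  obtain ⟨cl, hcl, hcl2⟩ := eig_one_form G hconn hl
  have horth : (inner ℝ ((P_isHermitian G).eigenvectorBasis k)
      ((P_isHermitian G).eigenvectorBasis l) : ℝ) = 0 :=
    (P_isHermitian G).eigenvectorBasis.orthonormal.2 hne
  rw [inner_eq_dot, hck, hcl] at horth
  have hW := sumW_pos G hconn.nonempty
  have hsum : ck * cl * (∑ r, Real.sqrt (degT G r) * Real.sqrt (degT G r)) = 0 := by
    rw [← horth, dotProduct, Finset.mul_sum]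
    apply Finset.sum_congr rfl
    intro r _
    ring
  rcases mul_eq_zero.mp hsum with h' | h'
  · rcases mul_eq_zero.mp h' with h'' | h''
    · rw [h''] at hck2; simp at hck2
    · rw [h''] at hcl2; simp at hcl2
  · exact hW.ne' h'

lemma proj_entry (hconn : G.Connected) (i j : Fin n) :
    ∑ k, (if (P_isHermitian G).eigenvalues k = 1 then (1:ℝ) else 0)
        * ((P_isHermitian G).eigenvectorUnitary : Matrix (Fin n) (Fin n) ℝ) i k
        * ((P_isHermitian G).eigenvectorUnitary : Matrix (Fin n) (Fin n) ℝ) j k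
      = Real.sqrt (degT G i) * Real.sqrt (degT G j)
          / (∑ r, Real.sqrt (degT G r) * Real.sqrt (degT G r)) := by
  obtain ⟨k0, hk0⟩ := exists_eig_one G hconn
  rw [Finset.sum_eq_single k0]
  · obtain ⟨c, hc, hc2⟩ := eig_one_form G hconn hk0
    have hW := (sumW_pos G hconn.nonempty).ne'
    rw [if_pos hk0, one_mul, (P_isHermitian G).eigenvectorUnitary_apply,
      (P_isHermitian G).eigenvectorUnitary_apply, hc]
    rw [eq_div_iff hW]
    show c * Real.sqrt (degT G i) * (c * Real.sqrt (degT G j)) * _ = _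
    linear_combination (Real.sqrt (degT G i) * Real.sqrt (degT G j)) * hc2
  · intro k _ hkne
    rw [if_neg fun h => hkne (eig_one_unique G hconn h hk0), zero_mul, zero_mul]
  · intro h
    exact absurd (Finset.mem_univ k0) h

lemma conj_diag_entry (U : Matrix (Fin n) (Fin n) ℝ) (μ : Fin n → ℝ) (i j : Fin n) :
    (U * diagonal μ * star U) i j = ∑ k, μ k * U i k * U j k := by
  rw [Matrix.mul_apply]
  apply Finset.sum_congr rfl
  intro k _
  rw [Matrix.mul_diagonal, Matrix.star_apply, star_trivial]
  ring

theorem pow_P_converges_to_projection' {d : ℕ} (hconn : G.Connected)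
    (H : Matrix (Fin n) (Fin d) ℝ) :
    ∀ (i : Fin n) (c : Fin d),
      Filter.Tendsto (fun t : ℕ => ((1 - Lsym G) ^ t * H : Matrix (Fin n) (Fin d) ℝ) i c)
        Filter.atTop
        (nhds (((∑ r, Real.sqrt (degT G r) * H r c) / (∑ r, Real.sqrt (degT G r) * Real.sqrt (degT G r)))
          * Real.sqrt (degT G i))) := by
  intro i c
  set U : Matrix (Fin n) (Fin n) ℝ :=
    ((P_isHermitian G).eigenvectorUnitary : Matrix (Fin n) (Fin n) ℝ) with hUdef
  have hform : ∀ t : ℕ, ((1 - Lsym G) ^ t * H : Matrix (Fin n) (Fin d) ℝ) i c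
      = ∑ j, ∑ k, ((P_isHermitian G).eigenvalues k ^ t) * (U i k * U j k * H j c) := by
    intro t
    rw [Matrix.mul_apply]
    apply Finset.sum_congr rfl
    intro j _
    rw [pow_spectral, conj_diag_entry, Finset.sum_mul]
    apply Finset.sum_congr rfl
    intro k _
    ring
  have hlim : Filter.Tendsto
      (fun t : ℕ => ∑ j, ∑ k, ((P_isHermitian G).eigenvalues k ^ t) * (U i k * U j k * H j c))
      Filter.atTop
      (nhds (∑ j, ∑ k, (if (P_isHermitian G).eigenvalues k = 1 then (1:ℝ) else 0)
        * (U i k * U j k * H j c))) := by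
    apply tendsto_finset_sum
    intro j _
    apply tendsto_finset_sum
    intro k _
    by_cases hev : (P_isHermitian G).eigenvalues k = 1
    · rw [if_pos hev]
      apply Filter.Tendsto.congr (f₁ := fun _ : ℕ => 1 * (U i k * U j k * H j c))
      · intro t; rw [hev, one_pow]
      · exact tendsto_const_nhds
    · rw [if_neg hev]
      have habs : |(P_isHermitian G).eigenvalues k| < 1 := by
        obtain ⟨h1, h2⟩ := eig_bound G k
        rw [abs_lt]
        exact ⟨h1, lt_of_le_of_ne h2 hev⟩
      exact (tendsto_pow_atTop_nhds_zero_of_abs_lt_one habs).mul_const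
        (U i k * U j k * H j c)
  have heq : (∑ j, ∑ k, (if (P_isHermitian G).eigenvalues k = 1 then (1:ℝ) else 0)
        * (U i k * U j k * H j c))
      = ((∑ r, Real.sqrt (degT G r) * H r c)
          / (∑ r, Real.sqrt (degT G r) * Real.sqrt (degT G r))) * Real.sqrt (degT G i) := by
    have h1 : ∀ j, (∑ k, (if (P_isHermitian G).eigenvalues k = 1 then (1:ℝ) else 0)
        * (U i k * U j k * H j c))
        = (Real.sqrt (degT G i) * Real.sqrt (degT G j)
            / (∑ r, Real.sqrt (degT G r) * Real.sqrt (degT G r))) * H j c := by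
      intro j
      rw [← proj_entry G hconn i j, Finset.sum_mul]
      apply Finset.sum_congr rfl
      intro k _
      ring
    rw [Finset.sum_congr rfl (fun j _ => h1 j), div_mul_eq_mul_div, Finset.sum_mul,
      Finset.sum_div]
    apply Finset.sum_congr rfl
    intro j _
    ring
  rw [← heq]
  exact Filter.Tendsto.congr (fun t => (hform t).symm) hlim

/-- For a connected graph with self-loops, P^t H converges entrywise, and each column's
limit is the orthogonal projection of the corresponding column of H onto the span of
D̃^{1/2}·1. -/
theorem pow_P_converges_to_projection {n d : ℕ} (G : SimpleGraph (Fin n)) [DecidableRel G.Adj]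
    (hconn : G.Connected) (H : Matrix (Fin n) (Fin d) ℝ) :
    ∀ (i : Fin n) (c : Fin d),
      Filter.Tendsto (fun t : ℕ => ((1 - Lsym G) ^ t * H : Matrix (Fin n) (Fin d) ℝ) i c)
        Filter.atTop
        (nhds (((∑ r, Real.sqrt (degT G r) * H r c) / (∑ r, Real.sqrt (degT G r) * Real.sqrt (degT G r)))
          * Real.sqrt (degT G i))) := by
  intro i c
  exact pow_P_converges_to_projection' G hconn H i c
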